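/- Let f : C → D be a discrete Conduché functor between 1-categories such that f is surjective on objects and on arrows. If C is free on a graph, then D is free on a graph, and the generating arrows of D are exactly the images under f of the generating arrows of C. -/

import Mathlib

open CategoryTheory

/-- A factorization of an arrow `γ : x ⟶ y` through an intermediate object. -/
structure Factorization {C : Type*} [Category C] {x y : C} (γ : x ⟶ y) : Type _ where
  mid : C
  left : x ⟶ mid
  right : mid ⟶ y
  fac : left ≫ right = γ

/-- The image of a factorization under a functor. -/
def factMap {C D : Type*} [Category C] [Category D] (F : C ⥤ D)
    {x y : C} (γ : x ⟶ y) (p : Factorization γ) : Factorization (F.map γ) where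
  mid := F.obj p.mid
  left := F.map p.left
  right := F.map p.right
  fac := by rw [← F.map_comp, p.fac]

/-- A functor is a discrete Conduché functor if every factorization of the image of an
arrow lifts uniquely to a factorization of that arrow. -/
def IsDiscreteConduche {C D : Type*} [Category C] [Category D] (F : C ⥤ D) : Prop :=
  ∀ ⦃x y : C⦄ (γ : x ⟶ y), Function.Bijective (factMap F γ)

/-- Composable sequences (possibly empty) of arrows belonging to a distinguished set `S`
of generating arrows. -/
inductive GenPath {C : Type*} [Category C] (S : ∀ ⦃x y : C⦄, (x ⟶ y) → Prop) :
    C → C → Type _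
  | nil (x : C) : GenPath S x x
  | cons {x y z : C} (f : x ⟶ y) (hf : S f) (p : GenPath S y z) : GenPath S x z

/-- Evaluation of a composable sequence of generators as an arrow of the category;
the empty sequence evaluates to an identity. -/
def GenPath.eval {C : Type*} [Category C] {S : ∀ ⦃x y : C⦄, (x ⟶ y) → Prop} :
    ∀ {x y : C}, GenPath S x y → (x ⟶ y)
  | _, _, .nil x => 𝟙 x
  | _, _, .cons f _ p => f ≫ p.eval

/-- `S` is a basis for `C` (i.e. `C` is free on the graph with arrows `S`) if every arrow
of `C` is the composite of a unique composable sequence of arrows of `S`. -/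
def IsBasis {C : Type*} [Category C] (S : ∀ ⦃x y : C⦄, (x ⟶ y) → Prop) : Prop :=
  ∀ {x y : C} (γ : x ⟶ y), ∃! p : GenPath S x y, p.eval = γ

section Aux

variable {C : Type*} [Category C]

/-- An arrow is trivial if it is an `eqToHom` (i.e. essentially an identity). -/
def Triv {x y : C} (γ : x ⟶ y) : Prop := ∃ e : x = y, γ = eqToHom e

variable {D : Type*} [Category D]

lemma fact_mk_eq {x y : C} {γ : x ⟶ y} (F : C ⥤ D) (P : Factorization γ)
    {m : D} {l : F.obj x ⟶ m} {r : m ⟶ F.obj y} {hlr : l ≫ r = F.map γ}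
    (h : factMap F γ P = ⟨m, l, r, hlr⟩) :
    ∃ e : F.obj P.mid = m, l = F.map P.left ≫ eqToHom e ∧ r = eqToHom e.symm ≫ F.map P.right := by
  obtain ⟨cm, a, b, hab⟩ := P
  simp only [factMap, Factorization.mk.injEq] at h
  obtain ⟨e, hl, hr⟩ := h
  refine ⟨e, ?_, ?_⟩
  · subst e; simpa using (eq_of_heq hl).symm
  · subst e; simpa using (eq_of_heq hr).symm

lemma heq_id_eqToHom {x y : C} (h : x = y) : HEq (𝟙 x) (eqToHom h) := by
  subst h; simp

lemma heq_eqToHom_id {x y : C} (h : x = y) : HEq (eqToHom h) (𝟙 y) := by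
  subst h; simp

lemma triv_of_map_eqToHom {F : C ⥤ D} (hF : IsDiscreteConduche F) {x y : C} (γ : x ⟶ y)
    (h : F.obj x = F.obj y) (hγ : F.map γ = eqToHom h) : Triv γ := by
  have key : factMap F γ ⟨x, 𝟙 x, γ, Category.id_comp γ⟩
      = factMap F γ ⟨y, γ, 𝟙 y, Category.comp_id γ⟩ := by
    simp only [factMap, Factorization.mk.injEq, Functor.map_id]
    refine ⟨h, ?_, ?_⟩
    · rw [hγ, F.map_id]; exact heq_id_eqToHom h
    · rw [hγ, F.map_id]; exact heq_eqToHom_id h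
  have := (hF γ).1 key
  simp only [Factorization.mk.injEq] at this
  obtain ⟨e, h1, -⟩ := this
  subst e
  exact ⟨rfl, by simpa using (eq_of_heq h1).symm⟩

variable {S : ∀ ⦃x y : C⦄, (x ⟶ y) → Prop}

def GenPath.append : ∀ {x y z : C}, GenPath S x y → GenPath S y z → GenPath S x z
  | _, _, _, .nil _, q => q
  | _, _, _, .cons f hf p, q => .cons f hf (p.append q)

lemma GenPath.eval_append : ∀ {x y z : C} (p : GenPath S x y) (q : GenPath S y z),
    (p.append q).eval = p.eval ≫ q.eval
  | _, _, _, .nil _, q => by simp [append, eval]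
  | _, _, _, .cons f hf p, q => by simp [append, eval, eval_append p q]

lemma not_triv_of_S (hS : IsBasis S) {x y : C} {f : x ⟶ y} (hf : S f) : ¬ Triv f := by
  rintro ⟨e, rfl⟩
  subst e
  have h1 : (GenPath.nil x : GenPath S x x).eval = 𝟙 x := rfl
  have h2 : (GenPath.cons (eqToHom rfl) hf (GenPath.nil x)).eval = 𝟙 x := by
    simp [GenPath.eval]
  have := ((hS (𝟙 x)).unique h1 h2)
  cases this

lemma triv_or_triv (hS : IsBasis S) {x y : C} {s : x ⟶ y} (hs : S s)
    {m : C} (u : x ⟶ m) (v : m ⟶ y) (huv : u ≫ v = s) : Triv u ∨ Triv v := by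
  obtain ⟨pu, hpu, -⟩ := hS u
  obtain ⟨pv, hpv, -⟩ := hS v
  have h1 : (pu.append pv).eval = s := by rw [GenPath.eval_append, hpu, hpv, huv]
  have h2 : (GenPath.cons s hs (GenPath.nil y)).eval = s := by simp [GenPath.eval]
  have he := (hS s).unique h1 h2
  cases pu with
  | nil =>
    left; exact ⟨rfl, by rw [← hpu]; simp [GenPath.eval]⟩
  | cons f hf pu' =>
    rw [show (GenPath.cons f hf pu').append pv = GenPath.cons f hf (pu'.append pv) from rfl] at he
    injection he with ex ey ez hfe hpe
    subst ey
    have hrest' := eq_of_heq hpe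
    cases pu' with
    | nil =>
      rw [show (GenPath.nil _).append pv = pv from rfl] at hrest'
      subst hrest'
      right; exact ⟨rfl, by rw [← hpv]; simp [GenPath.eval]⟩
    | cons f₂ hf₂ pu'' =>
      rw [show (GenPath.cons f₂ hf₂ pu'').append pv = GenPath.cons f₂ hf₂ (pu''.append pv) from rfl] at hrest'
      cases hrest'

lemma S_of_indec (hS : IsBasis S) {x y : C} (a : x ⟶ y) (h1 : ¬ Triv a)
    (h2 : ∀ {m : C} (u : x ⟶ m) (v : m ⟶ y), u ≫ v = a → Triv u ∨ Triv v) : S a := by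
  obtain ⟨p, hp, -⟩ := hS a
  cases p with
  | nil => exact absurd ⟨rfl, by rw [← hp]; simp [GenPath.eval]⟩ h1
  | cons f hf p' =>
    cases p' with
    | nil =>
      have : f = a := by rw [← hp]; simp [GenPath.eval]
      exact this ▸ hf
    | cons f₂ hf₂ p'' =>
      rcases h2 f (GenPath.cons f₂ hf₂ p'').eval (by rw [← hp]; rfl) with hu | hv
      · exact absurd hu (not_triv_of_S hS hf)
      · obtain ⟨e, hv⟩ := hv
        exfalso
        subst e
        rw [eqToHom_refl] at hv
        cases ((hS (𝟙 _)).unique hv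
          (show (GenPath.nil _).eval = 𝟙 _ from rfl))

variable {F : C ⥤ D}

lemma S_of_map_conj (hF : IsDiscreteConduche F) (hS : IsBasis S)
    {x y xs ys : C} {a : x ⟶ y} {s : xs ⟶ ys} (hs : S s)
    (e₁ : F.obj x = F.obj xs) (e₂ : F.obj ys = F.obj y)
    (ha : F.map a = eqToHom e₁ ≫ F.map s ≫ eqToHom e₂) : S a := by
  apply S_of_indec hS
  · rintro ⟨e, rfl⟩
    apply not_triv_of_S hS hs
    refine triv_of_map_eqToHom hF s (e₁.symm.trans ((congrArg F.obj e).trans e₂.symm)) ?_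
    have hmape : F.map (eqToHom e) = eqToHom (congrArg F.obj e) := eqToHom_map F e
    rw [hmape] at ha
    have : F.map s = eqToHom e₁.symm ≫ eqToHom (congrArg F.obj e) ≫ eqToHom e₂.symm := by
      rw [ha]; simp
    rw [this]; simp
  · intro m u v huv
    have hfac : (eqToHom e₁.symm ≫ F.map u) ≫ F.map v ≫ eqToHom e₂.symm = F.map s := by
      rw [← huv, F.map_comp] at ha
      calc (eqToHom e₁.symm ≫ F.map u) ≫ F.map v ≫ eqToHom e₂.symm
          = eqToHom e₁.symm ≫ (F.map u ≫ F.map v) ≫ eqToHom e₂.symm := by simp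
        _ = F.map s := by rw [ha]; simp
    obtain ⟨P, hP⟩ := (hF s).2 ⟨F.obj m, eqToHom e₁.symm ≫ F.map u, F.map v ≫ eqToHom e₂.symm, hfac⟩
    obtain ⟨e, hl, hr⟩ := fact_mk_eq F P hP
    rcases triv_or_triv hS hs P.left P.right P.fac with ⟨et, hu'⟩ | ⟨et, hv'⟩
    · left
      rw [hu', eqToHom_map] at hl
      refine triv_of_map_eqToHom hF u (e₁.trans ((congrArg F.obj et).trans e)) ?_
      have : F.map u = eqToHom e₁ ≫ eqToHom (congrArg F.obj et) ≫ eqToHom e := by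
        calc F.map u = eqToHom e₁ ≫ (eqToHom e₁.symm ≫ F.map u) := by simp
          _ = _ := by rw [hl]
      rw [this]; simp
    · right
      rw [hv', eqToHom_map] at hr
      refine triv_of_map_eqToHom hF v (e.symm.trans ((congrArg F.obj et).trans e₂)) ?_
      have : F.map v = eqToHom e.symm ≫ eqToHom (congrArg F.obj et) ≫ eqToHom e₂ := by
        calc F.map v = (F.map v ≫ eqToHom e₂.symm) ≫ eqToHom e₂ := by simp
          _ = _ := by rw [hr]; simp
      rw [this]; simp

variable {T : ∀ ⦃x y : D⦄, (x ⟶ y) → Prop}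

def pathMap (F : C ⥤ D) (hT : ∀ {x y : C} (f : x ⟶ y), S f → T (F.map f)) :
    ∀ {x y : C}, GenPath S x y → GenPath T (F.obj x) (F.obj y)
  | _, _, .nil x => .nil _
  | _, _, .cons f hf p => .cons (F.map f) (hT f hf) (pathMap F hT p)

lemma pathMap_eval (F : C ⥤ D) (hT : ∀ {x y : C} (f : x ⟶ y), S f → T (F.map f)) :
    ∀ {x y : C} (p : GenPath S x y), (pathMap F hT p).eval = F.map p.eval
  | _, _, .nil x => by simp [pathMap, GenPath.eval]
  | _, _, .cons f hf p => by simp [pathMap, GenPath.eval, pathMap_eval F hT p]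

def castPath {e e' d d' : D} (h : e = d) (h' : e' = d') (q : GenPath T e e') :
    GenPath T d d' := h ▸ h' ▸ q

lemma castPath_eval {e e' d d' : D} (h : e = d) (h' : e' = d') (q : GenPath T e e') :
    (castPath h h' q).eval = eqToHom h.symm ≫ q.eval ≫ eqToHom h' := by
  subst h; subst h'; simp [castPath]

lemma mainU (hF : IsDiscreteConduche F) (hS : IsBasis S)
    (hT₁ : ∀ {x y : C} (f : x ⟶ y), S f → T (F.map f))
    (hT₂ : ∀ {d d' : D} (g : d ⟶ d'), T g → ∃ (cs cs' : C) (s : cs ⟶ cs')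
      (hs : F.obj cs = d) (hs' : F.obj cs' = d'),
      S s ∧ F.map s = eqToHom hs ≫ g ≫ eqToHom hs'.symm) :
    ∀ {d d' : D} (q : GenPath T d d') {c c' : C} (h : F.obj c = d) (h' : F.obj c' = d')
      (f : c ⟶ c'), F.map f = eqToHom h ≫ q.eval ≫ eqToHom h'.symm →
      ∃ p : GenPath S c c', p.eval = f ∧ q = castPath h h' (pathMap F hT₁ p) := by
  intro d d' q
  induction q with
  | nil d =>
    intro c c' h h' f hf
    have htriv : Triv f := by
      refine triv_of_map_eqToHom hF f (h.trans h'.symm) ?_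
      rw [hf]; simp [GenPath.eval]
    obtain ⟨e, rfl⟩ := htriv
    subst e
    refine ⟨.nil c, by simp [GenPath.eval], ?_⟩
    subst h
    rfl
  | cons g₁ hg₁ q' ih =>
    intro c c' h h' f hf
    rename_i d m d'
    -- lift the factorization (eqToHom h ≫ g₁, q'.eval ≫ eqToHom h'.symm) of F.map f
    have hfac : (eqToHom h ≫ g₁) ≫ q'.eval ≫ eqToHom h'.symm = F.map f := by
      rw [hf]; simp [GenPath.eval]
    obtain ⟨P, hP⟩ := (hF f).2 ⟨m, eqToHom h ≫ g₁, q'.eval ≫ eqToHom h'.symm, hfac⟩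
    obtain ⟨e, hl, hr⟩ := fact_mk_eq F P hP
    -- the head of the lift is a generator
    obtain ⟨cs, cs', s, hs, hs', hSs, hFs⟩ := hT₂ g₁ hg₁
    have hSa : S P.left := by
      refine S_of_map_conj hF hS hSs (h.trans hs.symm) (hs'.trans e.symm) ?_
      have hg₁' : g₁ = eqToHom hs.symm ≫ F.map s ≫ eqToHom hs' := by rw [hFs]; simp
      calc F.map P.left = (eqToHom h ≫ g₁) ≫ eqToHom e.symm := by rw [hl]; simp
        _ = eqToHom (h.trans hs.symm) ≫ F.map s ≫ eqToHom (hs'.trans e.symm) := by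
            rw [hg₁']; simp
    -- apply the induction hypothesis to the tail
    have hfb : F.map P.right = eqToHom e ≫ q'.eval ≫ eqToHom h'.symm := by
      rw [hr]; simp
    obtain ⟨p', hp'eval, hq'⟩ := ih e h' P.right hfb
    refine ⟨.cons P.left hSa p', ?_, ?_⟩
    · show P.left ≫ p'.eval = f
      rw [hp'eval, P.fac]
    · -- q = castPath h h' (pathMap F hT₁ (cons P.left hSa p'))
      subst h
      subst h'
      obtain ⟨cm, a, b, hab⟩ := P
      dsimp at hl hr hq' hSa hp'eval ⊢
      subst e
      have hg₁'' : g₁ = F.map a := by simpa using hl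
      subst hg₁''
      rw [hq']
      rfl

end Aux

/-- If `f : C → D` is a discrete Conduché functor which is surjective on objects and on
arrows, and `C` is free on a graph with generating arrows `S`, then `D` is free on a graph
whose generating arrows are exactly the images under `f` of the arrows of `S`. -/
theorem isBasis_image_of_isDiscreteConduche {C D : Type*} [Category C] [Category D]
    (F : C ⥤ D) (hF : IsDiscreteConduche F)
    (hobj : Function.Surjective F.obj)
    (hmap : ∀ {d d' : D} (g : d ⟶ d'), ∃ (c c' : C) (f : c ⟶ c')
      (h : F.obj c = d) (h' : F.obj c' = d'),
      F.map f = eqToHom h ≫ g ≫ eqToHom h'.symm)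
    (S : ∀ ⦃x y : C⦄, (x ⟶ y) → Prop) (hS : IsBasis S) :
    IsBasis (fun ⦃d d' : D⦄ (g : d ⟶ d') => ∃ (c c' : C) (f : c ⟶ c')
      (h : F.obj c = d) (h' : F.obj c' = d'),
      S f ∧ F.map f = eqToHom h ≫ g ≫ eqToHom h'.symm) := by
  have hT₁ : ∀ {x y : C} (f : x ⟶ y), S f →
      ∃ (c c' : C) (f' : c ⟶ c') (h : F.obj c = F.obj x) (h' : F.obj c' = F.obj y),
        S f' ∧ F.map f' = eqToHom h ≫ F.map f ≫ eqToHom h'.symm :=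
    fun f hf => ⟨_, _, f, rfl, rfl, hf, by simp⟩
  intro d d' g
  obtain ⟨c, c', f, h, h', hfeq⟩ := hmap g
  obtain ⟨p₀, hp₀, hpu⟩ := hS f
  refine ⟨castPath h h' (pathMap F hT₁ p₀), ?_, ?_⟩
  · show (castPath h h' (pathMap F hT₁ p₀)).eval = g
    rw [castPath_eval, pathMap_eval, hp₀, hfeq]; simp
  · intro q hq
    obtain ⟨p, hpe, hqe⟩ := mainU hF hS hT₁ (fun g hg => hg) q h h' f
      (by rw [hq]; exact hfeq)
    rw [hqe, hpu p hpe]
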